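/- Let d, e be length-L complex sequences and x, y be length-N complex sequences, and set u = d ⊗ x and v = e ⊗ y (length-LN Kronecker sequences). Then for every shift τ = lN + n with 0 ≤ l ≤ L−1 and 0 ≤ n ≤ N−1, the periodic cross-correlation satisfies R_{u,v}(τ) = R_{d,e}(l) · C_{x,y}(n) + R_{d,e}(l+1) · C_{x,y}(n−N), where R_{u,v} is computed with indices modulo LN, R_{d,e} with indices modulo L, and C_{x,y}(n−N) is the aperiodic cross-correlation at the negative shift n−N (equal to 0 when n = 0). -/

import Mathlib

open Finset

/-- Periodic cross-correlation of two length-`M` complex sequences,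
indices taken modulo `M`, defined for all integer shifts `τ`. -/
noncomputable def pcc (M : ℕ) (a b : ℕ → ℂ) (τ : ℤ) : ℂ :=
  ∑ n ∈ Finset.range M, a n * (starRingEnd ℂ) (b ((((n : ℤ) + τ) % (M : ℤ)).toNat))

/-- Aperiodic cross-correlation of two length-`M` complex sequences at integer shift `τ`. -/
noncomputable def acc (M : ℕ) (a b : ℕ → ℂ) (τ : ℤ) : ℂ :=
  if 0 ≤ τ then
    ∑ n ∈ Finset.range (M - τ.toNat), a n * (starRingEnd ℂ) (b (n + τ.toNat))
  else
    ∑ n ∈ Finset.range (M - (-τ).toNat), a (n + (-τ).toNat) * (starRingEnd ℂ) (b n)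

/-- Kronecker product of a length-`L` sequence `d` with a length-`N` sequence `x`:
`(d ⊗ x) (l*N + n) = d l * x n`. -/
def kron (N : ℕ) (d x : ℕ → ℂ) : ℕ → ℂ :=
  fun k => d (k / N) * x (k % N)

lemma mod_key (L N s t : ℕ) (hL : 0 < L) (ht : t < N) :
    (s * N + t) % (L * N) = s % L * N + t := by
  have h1 : s * N + t = (s % L * N + t) + (L * N) * (s / L) := by
    conv_lhs => rw [← Nat.div_add_mod s L]
    ring
  rw [h1, Nat.add_mul_mod_self_left, Nat.mod_eq_of_lt]
  have h2 : s % L + 1 ≤ L := Nat.mod_lt s hL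
  calc s % L * N + t < (s % L + 1) * N := by rw [add_one_mul]; omega
    _ ≤ L * N := Nat.mul_le_mul_right N h2

lemma sum_range_mul_eq (L N : ℕ) (hN : 0 < N) (f : ℕ → ℂ) :
    ∑ k ∈ range (L * N), f k = ∑ a ∈ range L, ∑ b ∈ range N, f (a * N + b) := by
  rw [← Finset.sum_product']
  refine Finset.sum_nbij' (fun k => (k / N, k % N)) (fun p => p.1 * N + p.2) ?_ ?_ ?_ ?_ ?_
  · intro k hk
    simp only [mem_range, mem_product] at *
    exact ⟨(Nat.div_lt_iff_lt_mul hN).2 hk, Nat.mod_lt _ hN⟩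
  · intro p hp
    simp only [mem_range, mem_product] at *
    have h2 : p.1 + 1 ≤ L := hp.1
    calc p.1 * N + p.2 < (p.1 + 1) * N := by rw [add_one_mul]; omega
      _ ≤ L * N := Nat.mul_le_mul_right N h2
  · intro k _; exact Nat.div_add_mod' k N
  · intro p hp
    simp only [mem_range, mem_product] at hp
    ext
    · simp only
      rw [Nat.mul_comm, Nat.mul_add_div hN, Nat.div_eq_of_lt hp.2, Nat.add_zero]
    · simp only
      rw [Nat.mul_comm, Nat.mul_add_mod, Nat.mod_eq_of_lt hp.2]
  · intro k _
    simp only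
    rw [Nat.div_add_mod' k N]

theorem kronecker_periodic_cross_correlation
    (L N : ℕ) (hL : 0 < L) (hN : 0 < N)
    (d e x y : ℕ → ℂ) (l n : ℕ) (hl : l < L) (hn : n < N) :
    pcc (L * N) (kron N d x) (kron N e y) ((l : ℤ) * N + n) =
      pcc L d e l * acc N x y n + pcc L d e ((l : ℤ) + 1) * acc N x y ((n : ℤ) - N) := by
  classical
  set c := starRingEnd ℂ
  -- the summands of the LHS, with natural-number indices
  have hidx : ∀ k : ℕ, ((((k : ℤ)) + ((l : ℤ) * N + n)) % ((L * N : ℕ) : ℤ)).toNat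
      = (k + (l * N + n)) % (L * N) := by
    intro k
    have : ((k : ℤ)) + ((l : ℤ) * N + n) = ((k + (l * N + n) : ℕ) : ℤ) := by push_cast; ring
    rw [this]
    omega
  have lhs_eq : pcc (L * N) (kron N d x) (kron N e y) ((l : ℤ) * N + n)
      = ∑ k ∈ range (L * N), kron N d x k * c (kron N e y ((k + (l * N + n)) % (L * N))) := by
    unfold pcc
    refine Finset.sum_congr rfl fun k _ => ?_
    rw [hidx k]
  rw [lhs_eq, sum_range_mul_eq L N hN]
  -- values of the Kronecker sequences
  have hkron : ∀ (f g : ℕ → ℂ) (a b : ℕ), b < N → kron N f g (a * N + b) = f a * g b := by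
    intro f g a b hb
    unfold kron
    rw [Nat.mul_comm a N, Nat.mul_add_div hN, Nat.div_eq_of_lt hb, Nat.add_zero,
      Nat.mul_add_mod, Nat.mod_eq_of_lt hb]
  -- the two shifted index computations
  have hidx1 : ∀ a b : ℕ, b + n < N →
      (a * N + b + (l * N + n)) % (L * N) = ((a + l) % L) * N + (b + n) := by
    intro a b hb
    have : a * N + b + (l * N + n) = (a + l) * N + (b + n) := by ring
    rw [this, mod_key L N _ _ hL hb]
  have hidx2 : ∀ a b : ℕ, b < N → N ≤ b + n →
      (a * N + b + (l * N + n)) % (L * N) = ((a + l + 1) % L) * N + (b + n - N) := by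
    intro a b hb hb2
    have : a * N + b + (l * N + n) = (a + l + 1) * N + (b + n - N) := by
      have e1 : (a + l) * N = a * N + l * N := by ring
      have e2 : (a + l + 1) * N = (a + l) * N + N := by ring
      omega
    rw [this, mod_key L N _ _ hL (by omega)]
  -- abbreviations
  set A := ∑ b ∈ range (N - n), x b * c (y (b + n)) with hA
  set B := ∑ b ∈ range n, x (b + (N - n)) * c (y b) with hB
  -- inner sum identity
  have inner : ∀ a : ℕ,
      ∑ b ∈ range N, kron N d x (a * N + b) * c (kron N e y ((a * N + b + (l * N + n)) % (L * N)))
      = (d a * c (e ((a + l) % L))) * A + (d a * c (e ((a + l + 1) % L))) * B := by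
    intro a
    have hsplit : range N = Ico 0 (N - n) ∪ Ico (N - n) N := by
      rw [range_eq_Ico, Finset.Ico_union_Ico_eq_Ico (by omega) (by omega)]
    rw [hsplit, Finset.sum_union (by
      apply Finset.Ico_disjoint_Ico_consecutive)]
    congr 1
    · rw [hA, Finset.mul_sum, ← range_eq_Ico]
      refine Finset.sum_congr rfl fun b hb => ?_
      rw [mem_range] at hb
      have hbn : b + n < N := by omega
      rw [hkron d x a b (by omega), hidx1 a b hbn, hkron e y ((a + l) % L) (b + n) hbn, map_mul]
      ring
    · rw [hB, Finset.mul_sum]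
      rw [Finset.sum_Ico_eq_sum_range]
      refine Finset.sum_congr (by rw [Nat.sub_sub_self (by omega : n ≤ N)]) fun b hb => ?_
      rw [mem_range] at hb
      have h1 : N - n + b < N := by omega
      have h2 : N ≤ (N - n + b) + n := by omega
      rw [hkron d x a _ h1, hidx2 a _ h1 h2,
        show (N - n + b) + n - N = b by omega,
        hkron e y ((a + l + 1) % L) b (by omega), map_mul]
      have : N - n + b = b + (N - n) := by omega
      rw [this]
      ring
  rw [Finset.sum_congr rfl fun a _ => inner a, Finset.sum_add_distrib,
    ← Finset.sum_mul, ← Finset.sum_mul]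
  -- now identify the four factors
  have hpcc1 : pcc L d e l = ∑ a ∈ range L, d a * c (e ((a + l) % L)) := by
    unfold pcc
    refine Finset.sum_congr rfl fun a _ => ?_
    have : ((a : ℤ)) + (l : ℤ) = ((a + l : ℕ) : ℤ) := by push_cast; ring
    rw [this, show ((((a + l : ℕ) : ℤ)) % ((L:ℕ):ℤ)).toNat = (a + l) % L by omega]
  have hpcc2 : pcc L d e ((l : ℤ) + 1) = ∑ a ∈ range L, d a * c (e ((a + l + 1) % L)) := by
    unfold pcc
    refine Finset.sum_congr rfl fun a _ => ?_
    have : ((a : ℤ)) + ((l : ℤ) + 1) = ((a + l + 1 : ℕ) : ℤ) := by push_cast; ring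
    rw [this, show ((((a + l + 1 : ℕ) : ℤ)) % ((L:ℕ):ℤ)).toNat = (a + l + 1) % L by omega]
  have hacc1 : acc N x y n = A := by
    unfold acc
    rw [if_pos (by positivity)]
    simp [hA]
    rfl
  have hacc2 : acc N x y ((n : ℤ) - N) = B := by
    unfold acc
    rw [if_neg (by omega)]
    have h1 : (-((n : ℤ) - N)).toNat = N - n := by omega
    rw [h1, Nat.sub_sub_self (le_of_lt hn)]
  rw [hpcc1, hpcc2, hacc1, hacc2]
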